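/- Let σ ≥ 1, ρ₀ > 0, and for ρ with ρ₀/2 ≤ ρ ≤ ρ₀ define L_{ρ,m} = ρ^{m+1}(m+1)^{6+2σ}/(m!)^σ. Then there is a constant C > 0 such that for all m ∈ ℤ₊ and all k with ⌊m/2⌋+1 ≤ k ≤ m, one has binom(m,k) · L_{ρ,m}/(L_{ρ,k} · L_{ρ,m-k}) ≤ C/(m-k+1)^6. -/

import Mathlib

/-- `L_{ρ,m} = ρ^{m+1} (m+1)^{6+2σ} / (m!)^σ`. -/
noncomputable def Lr (σ ρ : ℝ) (m : ℕ) : ℝ :=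
  ρ ^ (m + 1) * ((m : ℝ) + 1) ^ (6 + 2 * σ) / (Nat.factorial m : ℝ) ^ σ

theorem binom_L_bound_high (σ ρ₀ : ℝ) (hσ : 1 ≤ σ) (hρ₀ : 0 < ρ₀) :
    ∃ C > 0, ∀ ρ : ℝ, ρ₀ / 2 ≤ ρ → ρ ≤ ρ₀ →
      ∀ m k : ℕ, m / 2 + 1 ≤ k → k ≤ m →
        (Nat.choose m k : ℝ) * Lr σ ρ m / (Lr σ ρ k * Lr σ ρ (m - k)) ≤
          C / (((m - k : ℕ) : ℝ) + 1) ^ 6 := by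
  refine ⟨(2:ℝ) ^ (6 + 2*σ) * 2 / ρ₀, by positivity, ?_⟩
  intro ρ hρl hρu m k hk1 hk2
  have hρ : 0 < ρ := lt_of_lt_of_le (by linarith) hρl
  have hfk : (0:ℝ) < (Nat.factorial k : ℝ) := by exact_mod_cast k.factorial_pos
  have hfd : (0:ℝ) < (Nat.factorial (m-k) : ℝ) := by exact_mod_cast (m-k).factorial_pos
  have hfm : (0:ℝ) < (Nat.factorial m : ℝ) := by exact_mod_cast m.factorial_pos
  have hS : (0:ℝ) < (Nat.factorial k : ℝ) ^ σ := Real.rpow_pos_of_pos hfk σ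
  have hU : (0:ℝ) < (Nat.factorial (m-k) : ℝ) ^ σ := Real.rpow_pos_of_pos hfd σ
  have hQ : (0:ℝ) < (Nat.factorial m : ℝ) ^ σ := Real.rpow_pos_of_pos hfm σ
  have ha : (0:ℝ) < (k:ℝ) + 1 := by positivity
  have hb : (0:ℝ) < ((m-k:ℕ):ℝ) + 1 := by positivity
  have hb1 : (1:ℝ) ≤ ((m-k:ℕ):ℝ) + 1 := by
    have := Nat.cast_nonneg (α := ℝ) (m-k); linarith
  have hae : (0:ℝ) < ((k:ℝ)+1) ^ (6+2*σ) := Real.rpow_pos_of_pos ha _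
  have hbe : (0:ℝ) < (((m-k:ℕ):ℝ)+1) ^ (6+2*σ) := Real.rpow_pos_of_pos hb _
  have hch1 : (1:ℝ) ≤ (Nat.choose m k : ℝ) := by exact_mod_cast Nat.choose_pos hk2
  have hLk : 0 < Lr σ ρ k := div_pos (mul_pos (pow_pos hρ _) hae) hS
  have hLd : 0 < Lr σ ρ (m-k) := div_pos (mul_pos (pow_pos hρ _) hbe) hU
  have hb6 : (0:ℝ) < (((m-k:ℕ):ℝ)+1) ^ 6 := by positivity
  rw [div_le_div_iff₀ (mul_pos hLk hLd) hb6]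
  -- Ingredient 1: choose * (k!^σ * (m-k)!^σ) ≤ m!^σ
  have h1 : (Nat.choose m k : ℝ) *
      ((Nat.factorial k : ℝ) ^ σ * (Nat.factorial (m-k) : ℝ) ^ σ) ≤
      (Nat.factorial m : ℝ) ^ σ := by
    rw [← Real.mul_rpow hfk.le hfd.le]
    calc (Nat.choose m k : ℝ) * ((Nat.factorial k : ℝ) * (Nat.factorial (m-k) : ℝ)) ^ σ
        ≤ (Nat.choose m k : ℝ) ^ σ *
            ((Nat.factorial k : ℝ) * (Nat.factorial (m-k) : ℝ)) ^ σ := by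
          refine mul_le_mul_of_nonneg_right ?_ (Real.rpow_nonneg (by positivity) σ)
          calc (Nat.choose m k : ℝ) = (Nat.choose m k : ℝ) ^ (1:ℝ) := (Real.rpow_one _).symm
            _ ≤ _ := Real.rpow_le_rpow_of_exponent_le hch1 hσ
      _ = ((Nat.choose m k : ℝ) * ((Nat.factorial k : ℝ) * (Nat.factorial (m-k) : ℝ))) ^ σ :=
          (Real.mul_rpow (by positivity) (by positivity)).symm
      _ = (Nat.factorial m : ℝ) ^ σ := by
          congr 1
          rw [← mul_assoc]
          exact_mod_cast Nat.choose_mul_factorial_mul_factorial hk2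
  -- Ingredient 2
  have hmk : (m:ℝ) + 1 ≤ 2 * ((k:ℝ) + 1) := by
    have h : m + 1 ≤ 2 * (k + 1) := by omega
    exact_mod_cast h
  have hMa : ((m:ℝ)+1) ^ (6+2*σ) ≤ (2:ℝ) ^ (6+2*σ) * ((k:ℝ)+1) ^ (6+2*σ) := by
    calc ((m:ℝ)+1) ^ (6+2*σ) ≤ (2 * ((k:ℝ)+1)) ^ (6+2*σ) :=
          Real.rpow_le_rpow (by positivity) hmk (by linarith)
      _ = (2:ℝ) ^ (6+2*σ) * ((k:ℝ)+1) ^ (6+2*σ) := Real.mul_rpow (by norm_num) ha.le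
  have hb6e : (((m-k:ℕ):ℝ)+1) ^ 6 ≤ (((m-k:ℕ):ℝ)+1) ^ (6+2*σ) := by
    calc (((m-k:ℕ):ℝ)+1) ^ 6 = (((m-k:ℕ):ℝ)+1) ^ ((6:ℕ):ℝ) :=
          (Real.rpow_natCast _ 6).symm
      _ ≤ _ := Real.rpow_le_rpow_of_exponent_le hb1 (by push_cast; linarith)
  have hρpow : ρ ^ (k+1) * ρ ^ (m-k+1) = ρ ^ (m+1) * ρ := by
    rw [← pow_add, ← pow_succ]; congr 1; omega
  have h2 : ρ ^ (m+1) * ((m:ℝ)+1) ^ (6+2*σ) * ((((m-k:ℕ):ℝ)+1) ^ 6) * ρ₀ ≤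
      (2:ℝ) ^ (6+2*σ) * 2 *
        (ρ ^ (k+1) * ((k:ℝ)+1) ^ (6+2*σ) * (ρ ^ (m-k+1) * (((m-k:ℕ):ℝ)+1) ^ (6+2*σ))) := by
    calc ρ ^ (m+1) * ((m:ℝ)+1) ^ (6+2*σ) * ((((m-k:ℕ):ℝ)+1) ^ 6) * ρ₀
        ≤ ρ ^ (m+1) * ((2:ℝ) ^ (6+2*σ) * ((k:ℝ)+1) ^ (6+2*σ)) *
            ((((m-k:ℕ):ℝ)+1) ^ (6+2*σ)) * (2 * ρ) := by
          have hρ2 : ρ₀ ≤ 2 * ρ := by linarith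
          gcongr
      _ = (2:ℝ) ^ (6+2*σ) * 2 *
            (ρ ^ (k+1) * ((k:ℝ)+1) ^ (6+2*σ) * (ρ ^ (m-k+1) * (((m-k:ℕ):ℝ)+1) ^ (6+2*σ))) := by
          linear_combination
            ((2:ℝ) ^ (6+2*σ) * ((k:ℝ)+1) ^ (6+2*σ) * (((m-k:ℕ):ℝ)+1) ^ (6+2*σ) * 2) * hρpow.symm
  -- Assemble
  simp only [Lr]
  calc (Nat.choose m k : ℝ) *
        (ρ ^ (m+1) * ((m:ℝ)+1) ^ (6+2*σ) / (Nat.factorial m : ℝ) ^ σ) *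
        ((((m-k:ℕ):ℝ)+1) ^ 6)
      = ((Nat.choose m k : ℝ) * (ρ ^ (m+1) * ((m:ℝ)+1) ^ (6+2*σ)) *
          ((((m-k:ℕ):ℝ)+1) ^ 6)) / (Nat.factorial m : ℝ) ^ σ := by ring
    _ ≤ ((2:ℝ) ^ (6+2*σ) * 2 / ρ₀ *
          (ρ ^ (k+1) * ((k:ℝ)+1) ^ (6+2*σ) * (ρ ^ (m-k+1) * (((m-k:ℕ):ℝ)+1) ^ (6+2*σ)))) /
          ((Nat.factorial k : ℝ) ^ σ * (Nat.factorial (m-k) : ℝ) ^ σ) := by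
        rw [div_le_div_iff₀ hQ (mul_pos hS hU)]
        apply le_of_mul_le_mul_right ?_ hρ₀
        have hcomb := mul_le_mul h1 h2 (by positivity) hQ.le
        calc (Nat.choose m k : ℝ) * (ρ ^ (m+1) * ((m:ℝ)+1) ^ (6+2*σ)) *
              ((((m-k:ℕ):ℝ)+1) ^ 6) *
              ((Nat.factorial k : ℝ) ^ σ * (Nat.factorial (m-k) : ℝ) ^ σ) * ρ₀
            = ((Nat.choose m k : ℝ) *
                ((Nat.factorial k : ℝ) ^ σ * (Nat.factorial (m-k) : ℝ) ^ σ)) *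
              (ρ ^ (m+1) * ((m:ℝ)+1) ^ (6+2*σ) * ((((m-k:ℕ):ℝ)+1) ^ 6) * ρ₀) := by ring
          _ ≤ (Nat.factorial m : ℝ) ^ σ *
              ((2:ℝ) ^ (6+2*σ) * 2 *
                (ρ ^ (k+1) * ((k:ℝ)+1) ^ (6+2*σ) *
                  (ρ ^ (m-k+1) * (((m-k:ℕ):ℝ)+1) ^ (6+2*σ)))) := hcomb
          _ = (2:ℝ) ^ (6+2*σ) * 2 / ρ₀ *
              (ρ ^ (k+1) * ((k:ℝ)+1) ^ (6+2*σ) *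
                (ρ ^ (m-k+1) * (((m-k:ℕ):ℝ)+1) ^ (6+2*σ))) *
              (Nat.factorial m : ℝ) ^ σ * ρ₀ := by
                field_simp
    _ = (2:ℝ) ^ (6+2*σ) * 2 / ρ₀ *
          (ρ ^ (k+1) * ((k:ℝ)+1) ^ (6+2*σ) / (Nat.factorial k : ℝ) ^ σ *
            (ρ ^ (m-k+1) * (((m-k:ℕ):ℝ)+1) ^ (6+2*σ) / (Nat.factorial (m-k) : ℝ) ^ σ)) := by
        ring
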